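/- Let L be a subcomplex of a finite simplicial complex K such that every vertex of K not in L is dominated by some vertex of L. Then K strongly collapses onto L. -/

import Mathlib

open Finset

attribute [local instance] Classical.propDecidable

noncomputable section

universe u v

/-- A finite abstract simplicial complex: a finite collection of nonempty finite sets
closed under taking nonempty subsets. -/
def IsComplex {V : Type u} (X : Finset (Finset V)) : Prop :=
  (∀ s ∈ X, s.Nonempty) ∧ ∀ s ∈ X, ∀ t : Finset V, t ⊆ s → t.Nonempty → t ∈ X

/-- `s` is a maximal simplex (facet) of `X`. -/
def IsFacet {V : Type u} (X : Finset (Finset V)) (s : Finset V) : Prop :=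
  s ∈ X ∧ ∀ t ∈ X, s ⊆ t → t = s

/-- An elementary collapse: `σ` is a free face of `X` whose unique maximal coface is `τ`,
and `Y` results from removing all simplices containing `σ`. -/
def ElemCollapse {V : Type u} (X Y : Finset (Finset V)) : Prop :=
  ∃ σ τ : Finset V, σ ∈ X ∧ IsFacet X τ ∧ σ ⊂ τ ∧
    (∀ t ∈ X, σ ⊆ t → t ⊆ τ) ∧ Y = X.filter (fun s => ¬ σ ⊆ s)

/-- `X` simplicially collapses onto `Y`. -/
def Collapses {V : Type u} (X Y : Finset (Finset V)) : Prop :=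
  Relation.ReflTransGen ElemCollapse X Y

/-- `X` is collapsible: it collapses to a single vertex. -/
def Collapsible {V : Type u} (X : Finset (Finset V)) : Prop :=
  ∃ v : V, Collapses X {{v}}

/-- The vertex `v` is dominated by the vertex `w ≠ v`: every facet containing `v`
contains `w`. -/
def Dominated {V : Type u} (X : Finset (Finset V)) (v w : V) : Prop :=
  w ≠ v ∧ ∀ s : Finset V, IsFacet X s → v ∈ s → w ∈ s

/-- An elementary strong collapse: deletion of a dominated vertex. -/
def ElemStrongCollapse {V : Type u} (X Y : Finset (Finset V)) : Prop :=
  ∃ v w : V, {v} ∈ X ∧ Dominated X v w ∧ Y = X.filter (fun s => v ∉ s)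

/-- `X` strongly collapses onto `Y`. -/
def StrongCollapses {V : Type u} (X Y : Finset (Finset V)) : Prop :=
  Relation.ReflTransGen ElemStrongCollapse X Y

/-- `X` is strongly collapsible: it strongly collapses to a single vertex. -/
def StrongCollapsible {V : Type u} (X : Finset (Finset V)) : Prop :=
  ∃ v : V, StrongCollapses X {{v}}

/-- The set of vertices of a complex. -/
def vertexSet {V : Type u} (X : Finset (Finset V)) : Finset V := X.sup id

/-- The link of a simplex `σ` in `X`. -/
def linkC {V : Type u} (X : Finset (Finset V)) (σ : Finset V) : Finset (Finset V) :=
  X.filter (fun η => Disjoint η σ ∧ η ∪ σ ∈ X)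

/-- The face-deletion of `σ` in `X`. -/
def faceDeletion {V : Type u} (X : Finset (Finset V)) (σ : Finset V) : Finset (Finset V) :=
  X.filter (fun η => ¬ σ ⊆ η)

/-- The simplicial join of two complexes (on disjoint vertex sets, via `Sum`). -/
def joinC {A : Type u} {B : Type v} (X : Finset (Finset A)) (Y : Finset (Finset B)) :
    Finset (Finset (A ⊕ B)) :=
  (((insert (∅ : Finset A) X) ×ˢ (insert (∅ : Finset B) Y)).image
      (fun p => p.1.image Sum.inl ∪ p.2.image Sum.inr)).filter (·.Nonempty)

/-- The flag (clique) complex on the admissible vertices (those satisfying `P`) of a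
finite type, with respect to a (reflexive, symmetric) compatibility relation `R`:
simplices are the nonempty finite sets of admissible vertices that are pairwise
compatible. -/
def cliqueComplex {A : Type u} [Fintype A] (P : A → Prop) (R : A → A → Prop) :
    Finset (Finset A) :=
  Finset.univ.filter (fun s : Finset A =>
    s.Nonempty ∧ (∀ a ∈ s, P a) ∧ ∀ a ∈ s, ∀ b ∈ s, R a b)

/-- A complex is a cone if some vertex lies in every maximal simplex. -/
def IsCone {A : Type u} (X : Finset (Finset A)) : Prop :=
  ∃ v : A, {v} ∈ X ∧ ∀ s, IsFacet X s → v ∈ s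

/-- Simplicial isomorphism (onto): `Y` is the image of `X` under an injection of
vertices. -/
def Isom {A : Type u} {B : Type v} (X : Finset (Finset A)) (Y : Finset (Finset B)) : Prop :=
  ∃ f : A → B, Function.Injective f ∧ Y = X.image (fun s => s.image f)

lemma mem_vertexSet_iff {V : Type u} {X : Finset (Finset V)} {v : V} :
    v ∈ vertexSet X ↔ ∃ s ∈ X, v ∈ s := by
  simp [vertexSet, Finset.mem_sup]

lemma subset_vertexSet {V : Type u} {X : Finset (Finset V)} {s : Finset V} (hs : s ∈ X) :
    s ⊆ vertexSet X := fun v hv => mem_vertexSet_iff.2 ⟨s, hs, hv⟩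

lemma exists_facet {V : Type u} (X : Finset (Finset V)) {s : Finset V} (hs : s ∈ X) :
    ∃ t, IsFacet X t ∧ s ⊆ t := by
  obtain ⟨t, ht, hmax⟩ := Finset.exists_maximal (s := X.filter (fun t => s ⊆ t))
    ⟨s, Finset.mem_filter.2 ⟨hs, subset_rfl⟩⟩
  simp only [Finset.mem_filter] at ht
  refine ⟨t, ⟨ht.1, fun u hu htu => ?_⟩, ht.2⟩
  by_contra hne
  exact hne (Finset.Subset.antisymm (hmax (Finset.mem_filter.2 ⟨hu, ht.2.trans htu⟩) htu) htu)

lemma stmt3_aux {V : Type u} (L : Finset (Finset V)) :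
    ∀ n (K : Finset (Finset V)), (vertexSet K \ vertexSet L).card ≤ n → IsComplex K →
    L ⊆ K → (∀ s ∈ K, s ⊆ vertexSet L → s ∈ L) →
    (∀ v : V, {v} ∈ K → {v} ∉ L → ∃ w, {w} ∈ L ∧ Dominated K v w) →
    StrongCollapses K L := by
  intro n
  induction n with
  | zero =>
    intro K hcard hK hsub hfull _
    have hemp : vertexSet K \ vertexSet L = ∅ := Finset.card_eq_zero.1 (Nat.le_zero.1 hcard)
    have hKL : K = L := by
      apply Finset.Subset.antisymm _ hsub
      intro s hs
      refine hfull s hs (fun v hv => ?_)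
      by_contra hvL
      exact (Finset.eq_empty_iff_forall_notMem.1 hemp v)
        (Finset.mem_sdiff.2 ⟨subset_vertexSet hs hv, hvL⟩)
    rw [hKL]; exact Relation.ReflTransGen.refl
  | succ n ih =>
    intro K hcard hK hsub hfull hdom
    by_cases hemp : vertexSet K \ vertexSet L = ∅
    · -- same argument as base case
      have hKL : K = L := by
        apply Finset.Subset.antisymm _ hsub
        intro s hs
        refine hfull s hs (fun v hv => ?_)
        by_contra hvL
        exact (Finset.eq_empty_iff_forall_notMem.1 hemp v)
          (Finset.mem_sdiff.2 ⟨subset_vertexSet hs hv, hvL⟩)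
      rw [hKL]; exact Relation.ReflTransGen.refl
    · obtain ⟨v, hv⟩ := Finset.nonempty_iff_ne_empty.2 hemp
      rw [Finset.mem_sdiff] at hv
      obtain ⟨hvK, hvL⟩ := hv
      obtain ⟨s0, hs0K, hvs0⟩ := mem_vertexSet_iff.1 hvK
      have hvsingle : {v} ∈ K :=
        hK.2 s0 hs0K {v} (Finset.singleton_subset_iff.2 hvs0) (Finset.singleton_nonempty v)
      have hvnotL : {v} ∉ L := fun h => hvL (subset_vertexSet h (Finset.mem_singleton_self v))
      obtain ⟨w, hwL, hdomvw⟩ := hdom v hvsingle hvnotL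
      set K' := K.filter (fun s => v ∉ s) with hK'
      have step : ElemStrongCollapse K K' := ⟨v, w, hvsingle, hdomvw, rfl⟩
      have hK'sub : K' ⊆ K := Finset.filter_subset _ _
      -- key: v is not a vertex of L, and vertices of L are ≠ v
      have hLv : ∀ s ∈ L, v ∉ s := fun s hs hvs => hvL (subset_vertexSet hs hvs)
      have hsub' : L ⊆ K' := fun s hs =>
        Finset.mem_filter.2 ⟨hsub hs, hLv s hs⟩
      have hK'complex : IsComplex K' := by
        constructor
        · intro s hs; exact hK.1 s (hK'sub hs)
        · intro s hs t hts htne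
          rw [Finset.mem_filter] at hs ⊢
          exact ⟨hK.2 s hs.1 t hts htne, fun hvt => hs.2 (hts hvt)⟩
      have hfull' : ∀ s ∈ K', s ⊆ vertexSet L → s ∈ L := fun s hs h =>
        hfull s (hK'sub hs) h
      -- facets of K' containing u still contain the dominating vertex
      have hdom' : ∀ u : V, {u} ∈ K' → {u} ∉ L → ∃ w', {w'} ∈ L ∧ Dominated K' u w' := by
        intro u huK' huL
        obtain ⟨w', hw'L, hw'ne, hw'dom⟩ := hdom u (hK'sub huK') huL
        refine ⟨w', hw'L, hw'ne, ?_⟩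
        intro s hs hus
        have hsK' : s ∈ K' := hs.1
        have hsK : s ∈ K := hK'sub hsK'
        have hvns : v ∉ s := (Finset.mem_filter.1 hsK').2
        have hw'v : w' ≠ v := fun h => by
          exact hvL (subset_vertexSet hw'L (by rw [← h]; exact Finset.mem_singleton_self w'))
        obtain ⟨t, htfacet, hst⟩ := exists_facet K hsK
        have hw't : w' ∈ t := hw'dom t htfacet (hst hus)
        by_cases hvt : v ∈ t
        · have hune : u ≠ v := fun h => hvns (h ▸ hus)
          have hmem : t.erase v ∈ K' := by
            refine Finset.mem_filter.2 ⟨hK.2 t htfacet.1 _ (Finset.erase_subset v t)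
              ⟨u, Finset.mem_erase.2 ⟨hune, hst hus⟩⟩, Finset.notMem_erase v t⟩
          have hseq : t.erase v = s := by
            refine hs.2 _ hmem (fun x hx => Finset.mem_erase.2 ⟨fun h => hvns (h ▸ hx), hst hx⟩)
          rw [← hseq]
          exact Finset.mem_erase.2 ⟨hw'v, hw't⟩
        · have : t ∈ K' := Finset.mem_filter.2 ⟨htfacet.1, hvt⟩
          have := hs.2 t this hst
          rw [← this]; exact hw't
      have hcard' : (vertexSet K' \ vertexSet L).card ≤ n := by
        have hssub : vertexSet K' \ vertexSet L ⊂ vertexSet K \ vertexSet L := by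
          constructor
          · intro x hx
            rw [Finset.mem_sdiff] at hx ⊢
            obtain ⟨s, hs, hxs⟩ := mem_vertexSet_iff.1 hx.1
            exact ⟨mem_vertexSet_iff.2 ⟨s, hK'sub hs, hxs⟩, hx.2⟩
          · intro h
            have hvmem : v ∈ vertexSet K' \ vertexSet L := h (Finset.mem_sdiff.2 ⟨hvK, hvL⟩)
            obtain ⟨s, hs, hvs⟩ := mem_vertexSet_iff.1 (Finset.mem_sdiff.1 hvmem).1
            exact (Finset.mem_filter.1 hs).2 hvs
        have := Finset.card_lt_card hssub
        omega
      exact Relation.ReflTransGen.head step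
        (ih K' hcard' hK'complex hsub' hfull' hdom')

/-- Barmak–Minian. If every vertex of `K` which is not in the full
subcomplex `L` is dominated by some vertex of `L`, then `K` strongly collapses onto
`L`. -/
theorem stmt3 {V : Type u} (K L : Finset (Finset V)) (hK : IsComplex K)
    (hL : IsComplex L) (hsub : L ⊆ K)
    (hfull : ∀ s ∈ K, s ⊆ vertexSet L → s ∈ L)
    (hdom : ∀ v : V, {v} ∈ K → {v} ∉ L → ∃ w, {w} ∈ L ∧ Dominated K v w) :
    StrongCollapses K L :=
  stmt3_aux L (vertexSet K \ vertexSet L).card K le_rfl hK hsub hfull hdom
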